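/- Let β_4 be the unique root in (1,2) of x³ = 2x² − x + 1 (numerically β_4 ≈ 1.75488), and let β ∈ (β_4, 2). Then every continuous map S : I_β → I_β such that S(x) = F_β(x) for all x ∈ X_β and such that S is monotone on the interval [0, 1/β] has, for every integer k ≥ 1, a periodic point of smallest period k (i.e., a point x ∈ I_β with S^k(x) = x and S^j(x) ≠ x for 1 ≤ j < k). -/

import Mathlib

/-- A 0-1 sequence: all values are at most 1. Index `k` corresponds to `ε_{k+1}` in the paper. -/
def isSeq (ε : ℕ → ℕ) : Prop := ∀ k, ε k ≤ 1

/-- The shift map σ. -/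
def shift (ε : ℕ → ℕ) : ℕ → ℕ := fun n => ε (n + 1)

/-- The mirror image ε̄, (ε̄)_n = 1 - ε_n. -/
def mirror (ε : ℕ → ℕ) : ℕ → ℕ := fun n => 1 - ε n

/-- Strict lexicographic order on sequences. -/
def lexLt (a b : ℕ → ℕ) : Prop := ∃ k, (∀ j, j < k → a j = b j) ∧ a k < b k

/-- Non-strict lexicographic order. -/
def lexLe (a b : ℕ → ℕ) : Prop := lexLt a b ∨ a = b

/-- ε is periodic with smallest period n ≥ 1. -/
def periodicSmallest (n : ℕ) (ε : ℕ → ℕ) : Prop :=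
  1 ≤ n ∧ shift^[n] ε = ε ∧ ∀ j, 1 ≤ j → j < n → shift^[j] ε ≠ ε

/-- π_β(ε) = Σ_{k≥1} ε_k β^{-k}. -/
noncomputable def piB (β : ℝ) (ε : ℕ → ℕ) : ℝ := ∑' k : ℕ, (ε k : ℝ) / β ^ (k + 1)

/-- ε is a unique β-expansion. -/
def memSigma (β : ℝ) (ε : ℕ → ℕ) : Prop :=
  isSeq ε ∧ ∀ ε', isSeq ε' → piB β ε' = piB β ε → ε' = ε

/-- U_n: the set of β ∈ (1,2) such that Σ_β contains a periodic sequence of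
smallest period n. -/
def U (n : ℕ) : Set ℝ :=
  {β | 1 < β ∧ β < 2 ∧ ∃ ε, memSigma β ε ∧ periodicSmallest n ε}

/-- The interval I_β = [0, 1/(β-1)]. -/
def Iset (β : ℝ) : Set ℝ := Set.Icc 0 (1 / (β - 1))

/-- X_β: the points of I_β having a unique β-expansion. -/
def Xset (β : ℝ) : Set ℝ := {x ∈ Iset β | ∃! ε : ℕ → ℕ, isSeq ε ∧ piB β ε = x}

/-- The map F_β (X_β misses the middle interval [1/β, 1/(β(β-1))]). -/
noncomputable def Fmap (β : ℝ) : ℝ → ℝ := fun x => if x < 1 / β then β * x else β * x - 1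

namespace S17

lemma summable_geom_aux {β : ℝ} (h1 : 1 < β) :
    Summable (fun k : ℕ => (1/β)^(k+1)) := by
  have hβ0 : (0:ℝ) < β := lt_trans one_pos h1
  exact ((summable_geometric_of_lt_one (by positivity)
      (by rw [div_lt_one hβ0]; exact h1)).comp_injective (add_left_injective 1))

lemma summable_piB {β : ℝ} (h1 : 1 < β) {ε : ℕ → ℕ} (hε : isSeq ε) :
    Summable (fun k : ℕ => (ε k : ℝ) / β ^ (k + 1)) := by
  have hβ0 : (0:ℝ) < β := lt_trans one_pos h1
  have hnn : ∀ k : ℕ, 0 ≤ (ε k : ℝ) / β ^ (k + 1) := fun k => by positivity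
  have hle : ∀ k : ℕ, (ε k : ℝ) / β ^ (k + 1) ≤ (1/β)^(k+1) := by
    intro k
    rw [div_pow, one_pow]
    apply div_le_div_of_nonneg_right _ (by positivity)
    exact_mod_cast hε k
  exact Summable.of_nonneg_of_le hnn hle (summable_geom_aux h1)

lemma piB_nonneg {β : ℝ} (h1 : 1 < β) (ε : ℕ → ℕ) :
    0 ≤ piB β ε := by
  have hβ0 : (0:ℝ) < β := lt_trans one_pos h1
  exact tsum_nonneg (fun k => by positivity)

lemma tsum_geom_aux {β : ℝ} (h1 : 1 < β) :
    ∑' k : ℕ, (1/β)^(k+1) = 1/(β-1) := by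
  have hβ0 : (0:ℝ) < β := lt_trans one_pos h1
  have hβ : β ≠ 0 := ne_of_gt hβ0
  have hb1 : β - 1 ≠ 0 := ne_of_gt (by linarith)
  have hr : (1/β) < 1 := by rw [div_lt_one hβ0]; exact h1
  have hr0 : (0:ℝ) ≤ 1/β := by positivity
  have h := tsum_geometric_of_lt_one hr0 hr
  calc ∑' k : ℕ, (1/β)^(k+1) = ∑' k : ℕ, (1/β)^k * (1/β) := by
        simp [pow_succ]
    _ = (∑' k : ℕ, (1/β)^k) * (1/β) := tsum_mul_right
    _ = (1 - 1/β)⁻¹ * (1/β) := by rw [h]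
    _ = 1/(β-1) := by
        rw [show (1 : ℝ) - 1/β = (β-1)/β by field_simp]
        rw [inv_div]
        field_simp

lemma piB_le {β : ℝ} (h1 : 1 < β) {ε : ℕ → ℕ} (hε : isSeq ε) :
    piB β ε ≤ 1/(β-1) := by
  have hβ0 : (0:ℝ) < β := lt_trans one_pos h1
  rw [← tsum_geom_aux h1]
  apply Summable.tsum_le_tsum _ (summable_piB h1 hε) (summable_geom_aux h1)
  intro k
  rw [div_pow, one_pow]
  apply div_le_div_of_nonneg_right _ (by positivity)
  exact_mod_cast hε k

lemma piB_shift {β : ℝ} (h1 : 1 < β) {ε : ℕ → ℕ} (hε : isSeq ε) :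
    piB β ε = (ε 0 : ℝ)/β + piB β (shift ε)/β := by
  have hβ0 : (0:ℝ) < β := lt_trans one_pos h1
  have hβ : β ≠ 0 := ne_of_gt hβ0
  have hsum := summable_piB h1 hε
  have h0 := Summable.tsum_eq_zero_add hsum
  rw [piB, h0]
  have he : ∀ k : ℕ, (ε (k+1) : ℝ) / β ^ (k+1+1) = ((shift ε k : ℝ) / β ^ (k+1))/β := by
    intro k
    rw [shift, pow_succ]
    ring
  simp only [he]
  rw [tsum_div_const, piB]
  norm_num

end S17

namespace S17

lemma isSeq_shift {ε : ℕ → ℕ} (hε : isSeq ε) : isSeq (shift ε) := fun k => hε (k+1)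

/-- digit forcing below the hole -/
lemma force0 {β : ℝ} (h1 : 1 < β) {ε : ℕ → ℕ} (hε : isSeq ε)
    (h : piB β ε < 1/β) : ε 0 = 0 ∧ piB β (shift ε) = β * piB β ε := by
  have hβ0 : (0:ℝ) < β := lt_trans one_pos h1
  have hβ : β ≠ 0 := ne_of_gt hβ0
  have hs := piB_shift h1 hε
  have hnn := piB_nonneg h1 (shift ε)
  have h0 : ε 0 = 0 := by
    by_contra hne
    have : ε 0 = 1 := by have := hε 0; omega
    rw [this] at hs
    push_cast at hs
    have : 1/β ≤ piB β ε := by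
      rw [hs]
      have : 0 ≤ piB β (shift ε) / β := by positivity
      linarith
    linarith
  refine ⟨h0, ?_⟩
  rw [h0] at hs
  push_cast at hs
  rw [hs]
  field_simp
  ring

/-- digit forcing above the hole -/
lemma force1 {β : ℝ} (h1 : 1 < β) {ε : ℕ → ℕ} (hε : isSeq ε)
    (h : 1/(β*(β-1)) < piB β ε) : ε 0 = 1 ∧ piB β (shift ε) = β * piB β ε - 1 := by
  have hβ0 : (0:ℝ) < β := lt_trans one_pos h1
  have hβ : β ≠ 0 := ne_of_gt hβ0
  have hb1 : (0:ℝ) < β - 1 := by linarith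
  have hs := piB_shift h1 hε
  have hub := piB_le h1 (isSeq_shift hε)
  have h0 : ε 0 = 1 := by
    by_contra hne
    have : ε 0 = 0 := by have := hε 0; omega
    rw [this] at hs
    push_cast at hs
    have : piB β ε ≤ 1/(β*(β-1)) := by
      rw [hs, zero_div, zero_add]
      rw [div_le_div_iff₀ hβ0 (by positivity)]
      calc piB β (shift ε) * (β * (β-1)) ≤ (1/(β-1)) * (β * (β-1)) := by
            apply mul_le_mul_of_nonneg_right hub (by positivity)
        _ = 1 * β := by field_simp
    linarith
  refine ⟨h0, ?_⟩
  rw [h0] at hs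
  push_cast at hs
  rw [hs]
  field_simp
  ring

/-- the pattern (1,1,0,0) repeated -/
def pat (n : ℕ) : ℕ := if n % 4 ≤ 1 then 1 else 0

lemma pat_le_one (n : ℕ) : pat n ≤ 1 := by unfold pat; split <;> omega

lemma isSeq_pat (r : ℕ) : isSeq (fun n => pat (n + r)) := fun _ => pat_le_one _

/-- the four tail values -/
noncomputable def tval (β : ℝ) (r : ℕ) : ℝ :=
  if r % 4 = 0 then β^2 / ((β-1)*(β^2+1))
  else if r % 4 = 1 then (β^2-β+1) / ((β-1)*(β^2+1))
  else if r % 4 = 2 then 1 / ((β-1)*(β^2+1))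
  else β / ((β-1)*(β^2+1))

end S17

namespace S17

variable {β : ℝ}

lemma hD_pos (h1 : 1 < β) : 0 < (β-1)*(β^2+1) := by nlinarith

lemma pat_congr {m n : ℕ} (h : m % 4 = n % 4) : pat m = pat n := by
  unfold pat; rw [h]

lemma pat_eq_one {r : ℕ} (h : r % 4 ≤ 1) : pat r = 1 := by
  unfold pat; rw [if_pos h]

lemma pat_eq_zero {r : ℕ} (h : 2 ≤ r % 4) : pat r = 0 := by
  unfold pat; rw [if_neg (by omega)]

lemma tval_mod (β : ℝ) (r : ℕ) : tval β r = tval β (r % 4) := by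
  have h : r % 4 % 4 = r % 4 := by omega
  unfold tval
  rw [h]

lemma tval0 {r : ℕ} (h : r % 4 = 0) : tval β r = β^2 / ((β-1)*(β^2+1)) := by
  unfold tval; rw [if_pos h]

lemma tval1 {r : ℕ} (h : r % 4 = 1) : tval β r = (β^2-β+1) / ((β-1)*(β^2+1)) := by
  unfold tval; rw [if_neg (by omega), if_pos h]

lemma tval2 {r : ℕ} (h : r % 4 = 2) : tval β r = 1 / ((β-1)*(β^2+1)) := by
  unfold tval; rw [if_neg (by omega), if_neg (by omega), if_pos h]

lemma tval3 {r : ℕ} (h : r % 4 = 3) : tval β r = β / ((β-1)*(β^2+1)) := by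
  unfold tval; rw [if_neg (by omega), if_neg (by omega), if_neg (by omega)]

lemma tval_lt (h1 : 1 < β) (hkey : 0 < β^3 - 2*β^2 + β - 1) {r : ℕ} (h : 2 ≤ r % 4) :
    tval β r < 1/β := by
  have hβ0 : (0:ℝ) < β := lt_trans one_pos h1
  have hD := hD_pos h1
  rcases (by omega : r % 4 = 2 ∨ r % 4 = 3) with h' | h'
  · rw [tval2 h', div_lt_div_iff₀ hD hβ0]; nlinarith
  · rw [tval3 h', div_lt_div_iff₀ hD hβ0]; nlinarith

lemma tval_gt (h1 : 1 < β) (hkey : 0 < β^3 - 2*β^2 + β - 1) {r : ℕ} (h : r % 4 ≤ 1) :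
    1/(β*(β-1)) < tval β r := by
  have hβ0 : (0:ℝ) < β := lt_trans one_pos h1
  have hD := hD_pos h1
  have hb1 : (0:ℝ) < β * (β-1) := by nlinarith
  rcases (by omega : r % 4 = 0 ∨ r % 4 = 1) with h' | h'
  · rw [tval0 h', div_lt_div_iff₀ hb1 hD]; nlinarith
  · rw [tval1 h', div_lt_div_iff₀ hb1 hD]; nlinarith

lemma tval_cycle (h1 : 1 < β) (r : ℕ) :
    β * tval β r - (pat r : ℝ) = tval β (r + 1) := by
  have hβ0 : (0:ℝ) < β := lt_trans one_pos h1
  have hDne : (β-1)*(β^2+1) ≠ 0 := ne_of_gt (hD_pos h1)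
  have hb1ne : β - 1 ≠ 0 := ne_of_gt (by linarith)
  rcases (by omega : r % 4 = 0 ∨ r % 4 = 1 ∨ r % 4 = 2 ∨ r % 4 = 3) with h'|h'|h'|h'
  · rw [tval0 h', tval1 (by omega), pat_eq_one (by omega)]; push_cast; field_simp; ring
  · rw [tval1 h', tval2 (by omega), pat_eq_one (by omega)]; push_cast; field_simp; ring
  · rw [tval2 h', tval3 (by omega), pat_eq_zero (by omega)]; push_cast; field_simp; try ring
  · rw [tval3 h', tval0 (by omega), pat_eq_zero (by omega)]; push_cast; field_simp; try ring

lemma onestep (h1 : 1 < β) (hkey : 0 < β^3 - 2*β^2 + β - 1)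
    {ε : ℕ → ℕ} (hε : isSeq ε) {r : ℕ} (h : piB β ε = tval β r) :
    ε 0 = pat r ∧ piB β (shift ε) = tval β (r + 1) := by
  rcases le_or_gt (r % 4) 1 with hr | hr
  · have hf := force1 h1 hε (h ▸ tval_gt h1 hkey hr)
    refine ⟨hf.1.trans (pat_eq_one hr).symm, ?_⟩
    rw [hf.2, h, ← tval_cycle h1 r, pat_eq_one hr]
    norm_num
  · have hr2 : 2 ≤ r % 4 := hr
    have hf := force0 h1 hε (h ▸ tval_lt h1 hkey hr2)
    refine ⟨hf.1.trans (pat_eq_zero hr2).symm, ?_⟩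
    rw [hf.2, h, ← tval_cycle h1 r, pat_eq_zero hr2]
    norm_num

lemma digits (h1 : 1 < β) (hkey : 0 < β^3 - 2*β^2 + β - 1) :
    ∀ n r : ℕ, ∀ ε : ℕ → ℕ, isSeq ε → piB β ε = tval β r → ε n = pat (n + r) := by
  intro n
  induction n with
  | zero => intro r ε hε h; simpa using (onestep h1 hkey hε h).1
  | succ n ih =>
    intro r ε hε h
    have hstep := onestep h1 hkey hε h
    have h2 := ih (r+1) (shift ε) (isSeq_shift hε) hstep.2
    rw [shift] at h2
    rw [h2]
    exact pat_congr (by omega)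

lemma shift_pat (r : ℕ) :
    shift (fun n => pat (n + r)) = fun n => pat (n + (r + 1)) := by
  funext n
  simp only [shift]
  exact pat_congr (by omega)

lemma piB_pat (h1 : 1 < β) (r : ℕ) :
    piB β (fun n => pat (n + r)) = tval β r := by
  have hβ0 : (0:ℝ) < β := lt_trans one_pos h1
  have hβ : β ≠ 0 := ne_of_gt hβ0
  have hD := hD_pos h1
  have hDne : (β-1)*(β^2+1) ≠ 0 := ne_of_gt hD
  set p : ℕ → ℝ := fun i => piB β (fun n => pat (n + i)) with hp
  have heq : ∀ i, p i = (pat i : ℝ)/β + p (i+1)/β := by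
    intro i
    have := piB_shift h1 (isSeq_pat i)
    rw [shift_pat i] at this
    simpa using this
  have hper : p 4 = p 0 := by
    have h44 : (fun n => pat (n + 4)) = (fun n => pat (n + 0)) := by
      funext n
      exact pat_congr (by omega)
    simp only [hp, h44]
  have e0 := heq 0; have e1 := heq 1; have e2 := heq 2; have e3 := heq 3
  rw [show pat 0 = 1 from rfl] at e0
  rw [show pat 1 = 1 from rfl] at e1
  rw [show pat 2 = 0 from rfl] at e2
  rw [show pat 3 = 0 from rfl] at e3
  rw [hper] at e3
  push_cast at e0 e1 e2 e3
  have c3 : p 3 = p 0 / β := by rw [e3]; ring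
  have c2 : p 2 = p 0 / β^2 := by rw [e2, c3]; ring
  have c1 : p 1 = 1/β + p 0/β^3 := by rw [e1, c2]; ring
  have hfix : p 0 = 1/β + 1/β^2 + p 0/β^4 := by
    nth_rewrite 1 [e0]
    rw [c1]
    ring
  have hp0 : p 0 = tval β 0 := by
    rw [tval0 (by norm_num)]
    set q : ℝ := β^2 / ((β-1)*(β^2+1)) with hq
    have hqfix : q = 1/β + 1/β^2 + q/β^4 := by
      have hb1ne : β - 1 ≠ 0 := ne_of_gt (by linarith)
      rw [hq]
      field_simp
      ring
    have hfac : (p 0 - q) * (1 - 1/β^4) = 0 := by linear_combination hfix - hqfix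
    have hne : (1 : ℝ) - 1/β^4 ≠ 0 := by
      have : (1:ℝ)/β^4 < 1 := by
        rw [div_lt_one (by positivity)]
        nlinarith
      linarith
    have := mul_eq_zero.mp hfac
    rcases this with h' | h'
    · linarith
    · exact absurd h' hne
  have hstep : ∀ i, p i = tval β i → p (i+1) = tval β (i+1) := by
    intro i hi
    have hei := heq i
    rw [hi] at hei
    have h2 : p (i+1) = β * tval β i - (pat i : ℝ) := by
      field_simp at hei
      linarith
    rw [h2, tval_cycle h1 i]
  have hp1 := hstep 0 hp0
  have hp2 := hstep 1 hp1
  have hp3 := hstep 2 hp2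
  have hred : (fun n => pat (n + r)) = (fun n => pat (n + r % 4)) := by
    funext n
    exact pat_congr (by omega)
  show p r = tval β r
  have : p r = p (r % 4) := by simp only [hp, hred]
  rw [this, tval_mod β r]
  rcases (by omega : r % 4 = 0 ∨ r % 4 = 1 ∨ r % 4 = 2 ∨ r % 4 = 3) with h'|h'|h'|h' <;>
    rw [h']
  · exact hp0
  · exact hp1
  · exact hp2
  · exact hp3

lemma exists_unique_exp (h1 : 1 < β) (hkey : 0 < β^3 - 2*β^2 + β - 1) (r : ℕ) :
    ∃! ε : ℕ → ℕ, isSeq ε ∧ piB β ε = tval β r := by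
  refine ⟨fun n => pat (n + r), ⟨isSeq_pat r, piB_pat h1 r⟩, ?_⟩
  intro ε' h'
  funext n
  exact digits h1 hkey n r ε' h'.1 h'.2

end S17

namespace S17

open Set

/-- If a continuous map's values at the endpoints of `[u,v]` surround `[p,q]`, there is a
subinterval mapped into `[p,q]` with endpoints going exactly to `p` and `q`. -/
lemma onto_sub (f : ℝ → ℝ) {u v p q : ℝ} (huv : u ≤ v) (hpq : p ≤ q)
    (hf : ContinuousOn f (Icc u v))
    (hp : p ∈ uIcc (f u) (f v)) (hq : q ∈ uIcc (f u) (f v)) :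
    ∃ u' v', u' ∈ Icc u v ∧ v' ∈ Icc u v ∧ u' ≤ v' ∧
      MapsTo f (Icc u' v') (Icc p q) ∧
      ((f u' = p ∧ f v' = q) ∨ (f u' = q ∧ f v' = p)) := by
  rcases le_total (f u) (f v) with hor | hor
  · -- increasing orientation
    rw [uIcc_of_le hor] at hp hq
    -- v' := least point with f v' = q
    set A : Set ℝ := Icc u v ∩ f ⁻¹' {q} with hA
    have hAne : A.Nonempty := by
      rcases intermediate_value_Icc huv hf ⟨hp.1.trans hpq, hq.2⟩ with ⟨x, hx, hfx⟩
      exact ⟨x, hx, hfx⟩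
    have hAcl : IsClosed A := hf.preimage_isClosed_of_isClosed isClosed_Icc isClosed_singleton
    have hAbd : BddBelow A := ⟨u, fun x hx => hx.1.1⟩
    set v' := sInf A with hv'
    have hv'A : v' ∈ A := hAcl.csInf_mem hAne hAbd
    have hfv' : f v' = q := hv'A.2
    have hv'I : v' ∈ Icc u v := hv'A.1
    -- u' := greatest point ≤ v' with f u' = p
    set B : Set ℝ := Icc u v' ∩ f ⁻¹' {p} with hB
    have hBne : B.Nonempty := by
      rcases intermediate_value_Icc hv'I.1 (hf.mono (Icc_subset_Icc le_rfl hv'I.2))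
        ⟨hp.1, by rw [hfv']; exact hpq⟩ with ⟨x, hx, hfx⟩
      exact ⟨x, hx, hfx⟩
    have hBcl : IsClosed B :=
      (hf.mono (Icc_subset_Icc le_rfl hv'I.2)).preimage_isClosed_of_isClosed
        isClosed_Icc isClosed_singleton
    have hBbd : BddAbove B := ⟨v', fun x hx => hx.1.2⟩
    set u' := sSup B with hu'
    have hu'B : u' ∈ B := hBcl.csSup_mem hBne hBbd
    have hfu' : f u' = p := hu'B.2
    have hu'I : u' ∈ Icc u v' := hu'B.1
    refine ⟨u', v', ⟨hu'I.1, hu'I.2.trans hv'I.2⟩, hv'I, hu'I.2, ?_, Or.inl ⟨hfu', hfv'⟩⟩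
    intro x hx
    have hxuv : x ∈ Icc u v := ⟨hu'I.1.trans hx.1, hx.2.trans hv'I.2⟩
    constructor
    · by_contra hc
      push_neg at hc
      have hxv' : x ∈ Icc x v' := ⟨le_rfl, hx.2⟩
      rcases intermediate_value_Icc hx.2
        (hf.mono (Icc_subset_Icc hxuv.1 hv'I.2)) ⟨le_of_lt hc, by rw [hfv']; exact hpq⟩
        with ⟨y, hy, hfy⟩
      have hyB : y ∈ B := ⟨⟨hxuv.1.trans hy.1, hy.2⟩, hfy⟩
      have : y ≤ u' := le_csSup hBbd hyB
      have hxu : u' < x := lt_of_le_of_ne hx.1 (by rintro rfl; exact absurd hfu' (ne_of_lt hc))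
      linarith [hy.1]
    · by_contra hc
      push_neg at hc
      rcases intermediate_value_Icc hx.1
        (hf.mono (Icc_subset_Icc hu'I.1 hxuv.2)) ⟨by rw [hfu']; exact hpq, le_of_lt hc⟩
        with ⟨y, hy, hfy⟩
      have hyA : y ∈ A := ⟨⟨hu'I.1.trans hy.1, hy.2.trans hxuv.2⟩, hfy⟩
      have : v' ≤ y := csInf_le hAbd hyA
      have hxv : x < v' := lt_of_le_of_ne hx.2 (by rintro rfl; exact absurd hfv' (ne_of_gt hc))
      linarith [hy.2]
  · -- decreasing orientation
    rw [uIcc_of_ge hor] at hp hq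
    set A : Set ℝ := Icc u v ∩ f ⁻¹' {p} with hA
    have hAne : A.Nonempty := by
      rcases intermediate_value_Icc' huv hf ⟨hp.1, hpq.trans hq.2⟩ with ⟨x, hx, hfx⟩
      exact ⟨x, hx, hfx⟩
    have hAcl : IsClosed A := hf.preimage_isClosed_of_isClosed isClosed_Icc isClosed_singleton
    have hAbd : BddBelow A := ⟨u, fun x hx => hx.1.1⟩
    set v' := sInf A with hv'
    have hv'A : v' ∈ A := hAcl.csInf_mem hAne hAbd
    have hfv' : f v' = p := hv'A.2
    have hv'I : v' ∈ Icc u v := hv'A.1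
    set B : Set ℝ := Icc u v' ∩ f ⁻¹' {q} with hB
    have hBne : B.Nonempty := by
      rcases intermediate_value_Icc' hv'I.1 (hf.mono (Icc_subset_Icc le_rfl hv'I.2))
        ⟨by rw [hfv']; exact hpq, hq.2⟩ with ⟨x, hx, hfx⟩
      exact ⟨x, hx, hfx⟩
    have hBcl : IsClosed B :=
      (hf.mono (Icc_subset_Icc le_rfl hv'I.2)).preimage_isClosed_of_isClosed
        isClosed_Icc isClosed_singleton
    have hBbd : BddAbove B := ⟨v', fun x hx => hx.1.2⟩
    set u' := sSup B with hu'
    have hu'B : u' ∈ B := hBcl.csSup_mem hBne hBbd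
    have hfu' : f u' = q := hu'B.2
    have hu'I : u' ∈ Icc u v' := hu'B.1
    refine ⟨u', v', ⟨hu'I.1, hu'I.2.trans hv'I.2⟩, hv'I, hu'I.2, ?_, Or.inr ⟨hfu', hfv'⟩⟩
    intro x hx
    have hxuv : x ∈ Icc u v := ⟨hu'I.1.trans hx.1, hx.2.trans hv'I.2⟩
    constructor
    · by_contra hc
      push_neg at hc
      rcases intermediate_value_Icc' hx.1
        (hf.mono (Icc_subset_Icc hu'I.1 hxuv.2)) ⟨le_of_lt hc, by rw [hfu']; exact hpq⟩
        with ⟨y, hy, hfy⟩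
      have hyA : y ∈ A := ⟨⟨hu'I.1.trans hy.1, hy.2.trans hxuv.2⟩, hfy⟩
      have : v' ≤ y := csInf_le hAbd hyA
      have hxv : x < v' := lt_of_le_of_ne hx.2 (by rintro rfl; exact absurd hfv' (ne_of_lt hc))
      linarith [hy.2]
    · by_contra hc
      push_neg at hc
      rcases intermediate_value_Icc' hx.2
        (hf.mono (Icc_subset_Icc hxuv.1 hv'I.2)) ⟨by rw [hfv']; exact hpq, le_of_lt hc⟩
        with ⟨y, hy, hfy⟩
      have hyB : y ∈ B := ⟨⟨hxuv.1.trans hy.1, hy.2⟩, hfy⟩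
      have : y ≤ u' := le_csSup hBbd hyB
      have hxu : u' < x := lt_of_le_of_ne hx.1 (by rintro rfl; exact absurd hfu' (ne_of_gt hc))
      linarith [hy.1]

/-- continuity of iterates along a chain of sets -/
lemma contOn_iter (f : ℝ → ℝ) (s : Set ℝ) (t : ℕ → Set ℝ) :
    ∀ n : ℕ, (∀ j, j < n → MapsTo (f^[j]) s (t j)) →
      (∀ j, j < n → ContinuousOn f (t j)) → ContinuousOn (f^[n]) s := by
  intro n
  induction n with
  | zero => intro _ _; simpa using continuousOn_id
  | succ n ih =>
    intro hm hc
    rw [Function.iterate_succ']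
    exact ContinuousOn.comp (hc n (by omega)) (ih (fun j hj => hm j (by omega))
      (fun j hj => hc j (by omega))) (hm n (by omega))

/-- the itinerary lemma -/
lemma chain (f : ℝ → ℝ) (lo hi : ℕ → ℝ)
    (hle : ∀ j, lo j ≤ hi j)
    (hcont : ∀ j, ContinuousOn f (Icc (lo j) (hi j)))
    (hcover : ∀ j, Icc (lo (j+1)) (hi (j+1)) ⊆ uIcc (f (lo j)) (f (hi j))) :
    ∀ n : ℕ, ∃ u v, u ≤ v ∧ Icc u v ⊆ Icc (lo 0) (hi 0) ∧
      (∀ j, j ≤ n → MapsTo (f^[j]) (Icc u v) (Icc (lo j) (hi j))) ∧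
      ((f^[n] u = lo n ∧ f^[n] v = hi n) ∨ (f^[n] u = hi n ∧ f^[n] v = lo n)) := by
  intro n
  induction n with
  | zero =>
    refine ⟨lo 0, hi 0, hle 0, subset_rfl, ?_, Or.inl ⟨by simp, by simp⟩⟩
    intro j hj
    interval_cases j
    simp [MapsTo]
  | succ n ih =>
    obtain ⟨u, v, huv, hsub, hmaps, hend⟩ := ih
    have hcn : ContinuousOn (f^[n+1]) (Icc u v) :=
      contOn_iter f _ (fun j => Icc (lo j) (hi j)) (n+1)
        (fun j hj => hmaps j (by omega)) (fun j _ => hcont j)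
    have hiter : ∀ x, f^[n+1] x = f (f^[n] x) := by
      intro x
      rw [Function.iterate_succ']
      rfl
    have huIcc : Icc (lo (n+1)) (hi (n+1)) ⊆ uIcc (f^[n+1] u) (f^[n+1] v) := by
      rw [hiter u, hiter v]
      rcases hend with ⟨h1, h2⟩ | ⟨h1, h2⟩
      · rw [h1, h2]; exact hcover n
      · rw [h1, h2, uIcc_comm]; exact hcover n
    obtain ⟨u', v', hu'I, hv'I, hu'v', hmapsTo, hends⟩ :=
      onto_sub (f^[n+1]) huv (hle (n+1)) hcn
        (huIcc ⟨le_rfl, hle (n+1)⟩) (huIcc ⟨hle (n+1), le_rfl⟩)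
    refine ⟨u', v', hu'v', (Icc_subset_Icc hu'I.1 hv'I.2).trans hsub, ?_, ?_⟩
    · intro j hj
      rcases Nat.lt_succ_iff_lt_or_eq.mp (Nat.lt_succ_of_le hj) with hj' | hj'
      · exact (hmaps j (by omega)).mono_left (Icc_subset_Icc hu'I.1 hv'I.2)
      · subst hj'
        exact hmapsTo
    · rcases hends with ⟨h1, h2⟩ | ⟨h1, h2⟩
      · exact Or.inl ⟨h1, h2⟩
      · exact Or.inr ⟨h1, h2⟩

/-- existence of a periodic point realizing a cyclic itinerary -/
lemma chain_fixed (f : ℝ → ℝ) (lo hi : ℕ → ℝ) (k : ℕ) (hk : 1 ≤ k)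
    (hle : ∀ j, lo j ≤ hi j)
    (hcont : ∀ j, ContinuousOn f (Icc (lo j) (hi j)))
    (hcover : ∀ j, Icc (lo (j+1)) (hi (j+1)) ⊆ uIcc (f (lo j)) (f (hi j)))
    (hper : lo k = lo 0 ∧ hi k = hi 0) :
    ∃ x, (∀ j, j ≤ k → f^[j] x ∈ Icc (lo j) (hi j)) ∧ f^[k] x = x := by
  obtain ⟨u, v, huv, hsub, hmaps, hend⟩ := chain f lo hi hle hcont hcover k
  have hcn : ContinuousOn (f^[k]) (Icc u v) :=
    contOn_iter f _ (fun j => Icc (lo j) (hi j)) k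
      (fun j hj => hmaps j (by omega)) (fun j _ => hcont j)
  have hu0 : lo 0 ≤ u := (hsub (left_mem_Icc.mpr huv)).1
  have hv0 : v ≤ hi 0 := (hsub (right_mem_Icc.mpr huv)).2
  have hg : ContinuousOn (fun x => f^[k] x - x) (Icc u v) := hcn.sub continuousOn_id
  have hex : ∃ x ∈ Icc u v, f^[k] x - x = 0 := by
    rcases hend with ⟨h1, h2⟩ | ⟨h1, h2⟩
    · have hgu : f^[k] u - u ≤ 0 := by rw [h1, hper.1]; linarith
      have hgv : 0 ≤ f^[k] v - v := by rw [h2, hper.2]; linarith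
      rcases intermediate_value_Icc huv hg ⟨hgu, hgv⟩ with ⟨x, hx, hfx⟩
      exact ⟨x, hx, hfx⟩
    · have hgu : 0 ≤ f^[k] u - u := by rw [h1, hper.2]; linarith
      have hgv : f^[k] v - v ≤ 0 := by rw [h2, hper.1]; linarith
      rcases intermediate_value_Icc' huv hg ⟨hgv, hgu⟩ with ⟨x, hx, hfx⟩
      exact ⟨x, hx, hfx⟩
  obtain ⟨x, hx, hfx⟩ := hex
  exact ⟨x, fun j hj => hmaps j hj hx, by linarith [sub_eq_zero.mp hfx]⟩

end S17

namespace S17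

lemma tval_mem {β : ℝ} (h1 : 1 < β) (r : ℕ) :
    tval β r ∈ Set.Icc (0:ℝ) (1/(β-1)) := by
  have hβ0 : (0:ℝ) < β := lt_trans one_pos h1
  have hD := hD_pos h1
  have hb1 : (0:ℝ) < β - 1 := by linarith
  rcases (by omega : r % 4 = 0 ∨ r % 4 = 1 ∨ r % 4 = 2 ∨ r % 4 = 3) with h'|h'|h'|h'
  · rw [tval0 h']
    constructor
    · positivity
    · rw [div_le_div_iff₀ hD hb1]; nlinarith
  · rw [tval1 h']
    constructor
    · have : (0:ℝ) < β^2 - β + 1 := by nlinarith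
      positivity
    · rw [div_le_div_iff₀ hD hb1]; nlinarith
  · rw [tval2 h']
    constructor
    · positivity
    · rw [div_le_div_iff₀ hD hb1]; nlinarith
  · rw [tval3 h']
    constructor
    · positivity
    · rw [div_le_div_iff₀ hD hb1]; nlinarith

end S17

/-- If β > β_4 (the root of x³ = 2x² - x + 1 in (1,2)), then any continuous
self-map S of I_β extending F_β and monotone on [0, 1/β] has a point of
smallest period k for every k ≥ 1. -/
theorem stmt17 (b4 β : ℝ) (hb4 : b4 ∈ Set.Ioo (1 : ℝ) 2)
    (hroot : b4 ^ 3 = 2 * b4 ^ 2 - b4 + 1) (hβ : β ∈ Set.Ioo b4 2)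
    (S : ℝ → ℝ) (hcont : ContinuousOn S (Iset β))
    (hmaps : Set.MapsTo S (Iset β) (Iset β))
    (hext : ∀ x ∈ Xset β, S x = Fmap β x)
    (hmono : MonotoneOn S (Set.Icc 0 (1 / β)) ∨ AntitoneOn S (Set.Icc 0 (1 / β))) :
    ∀ k : ℕ, 1 ≤ k → ∃ x ∈ Iset β, S^[k] x = x ∧ ∀ j, 1 ≤ j → j < k → S^[j] x ≠ x := by
  open S17 Set in
  obtain ⟨hb41, hb42⟩ := hb4
  obtain ⟨hβ1, hβ2⟩ := hβ
  have h1 : 1 < β := lt_trans hb41 hβ1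
  have hβ0 : (0:ℝ) < β := lt_trans one_pos h1
  have h2 : β < 2 := hβ2
  have hkey : 0 < β^3 - 2*β^2 + β - 1 := by
    nlinarith [mul_pos (sub_pos.mpr hβ1) (mul_pos (sub_pos.mpr h1) (sub_pos.mpr hb41)),
      mul_pos (sub_pos.mpr hβ1) (mul_pos hβ0 (sub_pos.mpr h1)),
      mul_pos (sub_pos.mpr hβ1) (mul_pos (lt_trans one_pos hb41) (sub_pos.mpr hb41))]
  have hD := hD_pos h1
  have hb1' : (0:ℝ) < β - 1 := by linarith
  -- the four orbit points
  have hXval : ∀ r : ℕ, tval β r ∈ Xset β := fun r =>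
    ⟨tval_mem h1 r, exists_unique_exp h1 hkey r⟩
  have hc_lt : tval β 2 < 1/β := tval_lt h1 hkey (by norm_num)
  have hd_lt : tval β 3 < 1/β := tval_lt h1 hkey (by norm_num)
  have hb_gt : 1/(β*(β-1)) < tval β 1 := tval_gt h1 hkey (by norm_num)
  have ha_gt : 1/(β*(β-1)) < tval β 0 := tval_gt h1 hkey (by norm_num)
  have hββ : 1/β ≤ 1/(β*(β-1)) := by
    rw [div_le_div_iff₀ hβ0 (by positivity)]
    nlinarith
  have hcd : tval β 2 < tval β 3 := by
    rw [tval2 (by norm_num), tval3 (by norm_num)]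
    rw [div_lt_div_iff₀ hD hD]
    nlinarith
  have hdb : tval β 3 < tval β 1 := lt_of_lt_of_le hd_lt (le_of_lt (lt_of_le_of_lt hββ hb_gt))
  have hba : tval β 1 < tval β 0 := by
    rw [tval1 (by norm_num), tval0 (by norm_num)]
    rw [div_lt_div_iff₀ hD hD]
    nlinarith
  have hc0 : (0:ℝ) ≤ tval β 2 := (tval_mem h1 2).1
  have ha_le : tval β 0 ≤ 1/(β-1) := (tval_mem h1 0).2
  -- values of S on the orbit
  have hS2 : S (tval β 2) = tval β 3 := by
    rw [hext _ (hXval 2)]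
    show (if tval β 2 < 1/β then β * tval β 2 else β * tval β 2 - 1) = tval β 3
    rw [if_pos hc_lt]
    have hcyc := tval_cycle h1 2
    rw [show pat 2 = 0 from rfl] at hcyc
    push_cast at hcyc
    linarith
  have hS3 : S (tval β 3) = tval β 0 := by
    rw [hext _ (hXval 3)]
    show (if tval β 3 < 1/β then β * tval β 3 else β * tval β 3 - 1) = tval β 0
    rw [if_pos hd_lt]
    have hcyc := tval_cycle h1 3
    rw [show pat 3 = 0 from rfl] at hcyc
    have h40 : tval β 4 = tval β 0 := by
      have := tval_mod β 4
      norm_num at this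
      exact this
    push_cast at hcyc
    rw [h40] at hcyc
    linarith
  have hS1 : S (tval β 1) = tval β 2 := by
    rw [hext _ (hXval 1)]
    show (if tval β 1 < 1/β then β * tval β 1 else β * tval β 1 - 1) = tval β 2
    rw [if_neg (by push_neg; exact le_of_lt (lt_of_le_of_lt hββ hb_gt))]
    have hcyc := tval_cycle h1 1
    rw [show pat 1 = 1 from rfl] at hcyc
    push_cast at hcyc
    linarith
  -- abbreviations
  set cc := tval β 2 with hcc
  set dd := tval β 3 with hdd
  set bb := tval β 1 with hbb
  set aa := tval β 0 with haa
  intro k hk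
  -- the itinerary intervals
  set lo : ℕ → ℝ := fun j => if j % k = 0 ∧ 2 ≤ k then cc else dd with hlo
  set hi : ℕ → ℝ := fun j => if j % k = 0 ∧ 2 ≤ k then dd else bb with hhi
  have hIsub : ∀ j, Icc (lo j) (hi j) ⊆ Icc (0:ℝ) (1/(β-1)) := by
    intro j
    apply Icc_subset_Icc
    · simp only [hlo]
      split
      · exact hc0
      · linarith
    · simp only [hhi]
      split
      · linarith
      · linarith
  have hle : ∀ j, lo j ≤ hi j := by
    intro j
    simp only [hlo, hhi]
    split
    · linarith
    · linarith
  have hcont' : ∀ j, ContinuousOn S (Icc (lo j) (hi j)) := fun j =>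
    hcont.mono (hIsub j)
  have hcover : ∀ j, Icc (lo (j+1)) (hi (j+1)) ⊆ uIcc (S (lo j)) (S (hi j)) := by
    intro j
    by_cases hA : j % k = 0 ∧ 2 ≤ k
    · have hj1 : ¬((j+1) % k = 0 ∧ 2 ≤ k) := by
        rintro ⟨hj0, -⟩
        obtain ⟨hjk, hk2⟩ := hA
        rw [Nat.add_mod, hjk, Nat.zero_add] at hj0
        rw [Nat.mod_eq_of_lt (by omega : 1 < k)] at hj0
        rw [Nat.mod_eq_of_lt (by omega : 1 < k)] at hj0
        omega
      simp only [hlo, hhi, if_pos hA, if_neg hj1]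
      rw [hS2, hS3, uIcc_of_le (by linarith : dd ≤ aa)]
      exact Icc_subset_Icc le_rfl (by linarith)
    · simp only [hlo, hhi, if_neg hA]
      rw [hS3, hS1, uIcc_of_ge (by linarith : cc ≤ aa)]
      by_cases hB : (j+1) % k = 0 ∧ 2 ≤ k
      · rw [if_pos hB, if_pos hB]
        exact Icc_subset_Icc le_rfl (by linarith)
      · rw [if_neg hB, if_neg hB]
        exact Icc_subset_Icc (by linarith) (by linarith)
  have hper : lo k = lo 0 ∧ hi k = hi 0 := by
    constructor <;> simp only [hlo, hhi, Nat.mod_self, Nat.zero_mod]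
  obtain ⟨x, hxit, hxfix⟩ := chain_fixed S lo hi k hk hle hcont' hcover hper
  have hx0 : x ∈ Icc (lo 0) (hi 0) := by
    have := hxit 0 (Nat.zero_le k)
    simpa using this
  refine ⟨x, hIsub 0 hx0, hxfix, ?_⟩
  intro j hj1 hjk heq
  have hk2 : 2 ≤ k := by omega
  have h00 : (0 % k = 0 ∧ 2 ≤ k) := ⟨Nat.zero_mod k, hk2⟩
  have hx0' : x ∈ Icc cc dd := by
    rw [hlo, hhi] at hx0
    simp only [if_pos h00] at hx0
    exact hx0
  have hjmod : ¬(j % k = 0 ∧ 2 ≤ k) := by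
    rintro ⟨hj0, -⟩
    rw [Nat.mod_eq_of_lt hjk] at hj0
    omega
  have hxj : S^[j] x ∈ Icc dd bb := by
    have := hxit j (le_of_lt hjk)
    rw [hlo, hhi] at this
    simp only [if_neg hjmod] at this
    exact this
  rw [heq] at hxj
  have hxd : x = dd := le_antisymm hx0'.2 hxj.1
  have h1mod : ¬(1 % k = 0 ∧ 2 ≤ k) := by
    rintro ⟨hj0, -⟩
    rw [Nat.mod_eq_of_lt (by omega : 1 < k)] at hj0
    omega
  have hx1 : S^[1] x ∈ Icc dd bb := by
    have := hxit 1 (by omega)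
    rw [hlo, hhi] at this
    simp only [if_neg h1mod] at this
    exact this
  rw [Function.iterate_one, hxd, hS3] at hx1
  linarith [hx1.2]
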